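/- Let H be a complex Hilbert space, and let K and K̃ be bounded self-adjoint linear operators on H. Suppose K e = λ e with ‖e‖ = 1, K̃ ẽ = λ̃ ẽ with ‖ẽ‖ = 1, where λ, λ̃ ∈ ℝ, and suppose ⟨e, ẽ⟩ ≠ 0. Then |λ − λ̃| ≤ ‖(K − K̃) e‖ / |⟨e, ẽ⟩|. -/

import Mathlib

open MeasureTheory

noncomputable section

/-- **Gershgorin-type accuracy estimate for a simple eigenvalue.**
If `K e = λ e` and `K̃ ẽ = λ̃ ẽ` with unit vectors `e, ẽ` and self-adjoint bounded
operators `K, K̃` on a complex Hilbert space, and `⟨e, ẽ⟩ ≠ 0`, then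
`|λ − λ̃| ≤ ‖(K − K̃) e‖ / |⟨e, ẽ⟩|`. -/
theorem eigenvalue_accuracy_simple
    {H : Type*} [NormedAddCommGroup H] [InnerProductSpace ℂ H] [CompleteSpace H]
    (K K' : H →L[ℂ] H) (hK : IsSelfAdjoint K) (hK' : IsSelfAdjoint K')
    (e e' : H) (he : ‖e‖ = 1) (he' : ‖e'‖ = 1) (lam lam' : ℝ)
    (hKe : K e = (lam : ℂ) • e) (hK'e' : K' e' = (lam' : ℂ) • e')
    (hov : (inner ℂ e e' : ℂ) ≠ 0) :
    |lam - lam'| ≤ ‖(K - K') e‖ / ‖(inner ℂ e e' : ℂ)‖ := by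
  have key : (inner ℂ ((K - K') e) e' : ℂ) = ((lam : ℂ) - lam') * inner ℂ e e' := by
    have h1 : (inner ℂ (K e) e' : ℂ) = (lam : ℂ) * inner ℂ e e' := by
      rw [hKe, inner_smul_left, Complex.conj_ofReal]
    have h2 : (inner ℂ (K' e) e' : ℂ) = (lam' : ℂ) * inner ℂ e e' := by
      have := ContinuousLinearMap.adjoint_inner_left K' e' e
      rw [hK'.adjoint_eq] at this
      rw [this, hK'e', inner_smul_right]
    simp only [ContinuousLinearMap.sub_apply, inner_sub_left, h1, h2, sub_mul]
  rw [le_div_iff₀ (by simpa using (norm_pos_iff.mpr hov))]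
  calc |lam - lam'| * ‖(inner ℂ e e' : ℂ)‖
      = ‖((lam : ℂ) - lam') * inner ℂ e e'‖ := by
        rw [norm_mul]
        congr 1
        rw [← Complex.ofReal_sub, Complex.norm_real, Real.norm_eq_abs]
    _ = ‖(inner ℂ ((K - K') e) e' : ℂ)‖ := by rw [← key]
    _ ≤ ‖(K - K') e‖ * ‖e'‖ := norm_inner_le_norm _ _
    _ = ‖(K - K') e‖ := by rw [he', mul_one]

end
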